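/- Let k ≥ 1, y : Fin k → ℕ, n : Fin k → ℕ. If there exists a feasible allocation matrix serving exactly u j consumers of flexibility level j for each j (each consumer of level j gets at most one good of some variety l ≤ j, and variety-l allocations total at most y l), then for every j, ∑_{l ≤ j} u l ≤ ∑_{l ≤ j} y l and u j ≤ n j. Combined with the previous direction, the set of achievable service vectors u equals { u | ∀ j, ∑_{l ≤ j} u l ≤ ∑_{l ≤ j} y l and u j ≤ n j }. -/
import Mathlib


/-- If a feasible allocation matrix serves exactly `u j` consumers of each
flexibility level `j` (each level-`j` consumer gets at most one good, only of varieties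
`l ≤ j`, and variety-`l` allocations total at most `y l`), then for every `j`,
`∑_{l ≤ j} u l ≤ ∑_{l ≤ j} y l` and `u j ≤ n j`. -/
theorem stmt1 (k : ℕ) (hk : 1 ≤ k) (y n u : Fin k → ℕ)
    (A : (j : Fin k) → Fin (n j) → Fin k → Bool)
    (ha1 : ∀ (j : Fin k) (i : Fin (n j)),
      (∑ l : Fin k, (if A j i l then 1 else 0)) ≤ 1)
    (ha2 : ∀ (j : Fin k) (i : Fin (n j)) (l : Fin k), A j i l = true → l ≤ j)
    (hb : ∀ l : Fin k,
      (∑ j : Fin k, ∑ i : Fin (n j), (if A j i l then 1 else 0)) ≤ y l)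
    (hc : ∀ j : Fin k,
      (∑ i : Fin (n j), ∑ l : Fin k, (if A j i l then 1 else 0)) = u j) :
    ∀ j : Fin k,
      (∑ l ∈ Finset.Iic j, u l) ≤ (∑ l ∈ Finset.Iic j, y l) ∧ u j ≤ n j := by
  intro j
  constructor
  · calc ∑ l ∈ Finset.Iic j, u l
        = ∑ j' ∈ Finset.Iic j, ∑ i : Fin (n j'), ∑ l : Fin k,
            (if A j' i l then 1 else 0) :=
          Finset.sum_congr rfl fun j' _ => (hc j').symm
      _ = ∑ j' ∈ Finset.Iic j, ∑ i : Fin (n j'), ∑ l ∈ Finset.Iic j,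
            (if A j' i l then 1 else 0) := by
          refine Finset.sum_congr rfl fun j' hj' => Finset.sum_congr rfl fun i _ => ?_
          refine (Finset.sum_subset (Finset.subset_univ _) ?_).symm
          intro l _ hl
          simp only [Finset.mem_Iic] at hl
          simp only [ite_eq_right_iff]
          intro h
          exact absurd (le_trans (ha2 j' i l h) (Finset.mem_Iic.mp hj')) hl
      _ = ∑ l ∈ Finset.Iic j, ∑ j' ∈ Finset.Iic j, ∑ i : Fin (n j'),
            (if A j' i l then 1 else 0) := by
          rw [Finset.sum_comm]
          exact Finset.sum_congr rfl fun j' _ => Finset.sum_comm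
      _ ≤ ∑ l ∈ Finset.Iic j, y l := by
          refine Finset.sum_le_sum fun l _ => le_trans ?_ (hb l)
          exact Finset.sum_le_sum_of_subset (Finset.subset_univ _)
  · calc u j = ∑ i : Fin (n j), ∑ l : Fin k, (if A j i l then 1 else 0) := (hc j).symm
      _ ≤ ∑ _i : Fin (n j), 1 := Finset.sum_le_sum fun i _ => ha1 j i
      _ = n j := by simp
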